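/- Let h > 0, σ > 0, ω ∈ ℝ with ω ≠ 0, and let ξ ∈ ℝ satisfy ω ξ > 0 and |ξ| < π/h. Then the denominator 2 + i(σ/ω)(1 − e^{iξh}) is nonzero and |ρ(σ, ξ, ω)| < 1. -/

import Mathlib

/-- The attenuation factor
`ρ(σ, ξ, ω) = (2 + i(σ/ω)(1 − e^{−iξh})) / (2 + i(σ/ω)(1 − e^{iξh}))`. -/
noncomputable def rho (σ : ℝ) (ξ : ℂ) (ω h : ℝ) : ℂ :=
  (2 + Complex.I * ((σ : ℂ) / (ω : ℂ)) * (1 - Complex.exp (-(Complex.I * ξ * (h : ℂ))))) /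
  (2 + Complex.I * ((σ : ℂ) / (ω : ℂ)) * (1 - Complex.exp (Complex.I * ξ * (h : ℂ))))

/-- for real wavenumbers `ξ` with `ωξ > 0` and `|ξ| < π/h`, the attenuation
factor satisfies `|ρ(σ, ξ, ω)| < 1` (and its denominator is nonzero). -/
theorem stmt7 (h : ℝ) (hh : 0 < h) (σ : ℝ) (hσ : 0 < σ) (ω : ℝ) (hω : ω ≠ 0)
    (ξ : ℝ) (hωξ : 0 < ω * ξ) (hξ : |ξ| < Real.pi / h) :
    (2 + Complex.I * ((σ : ℂ) / (ω : ℂ)) *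
        (1 - Complex.exp (Complex.I * (ξ : ℂ) * (h : ℂ))) ≠ 0) ∧
    ‖rho σ (ξ : ℂ) ω h‖ < 1 := by
  set θ : ℝ := ξ * h with hθ
  set s : ℝ := σ / ω with hs
  -- sign analysis
  have hθπ : |θ| < Real.pi := by
    have : |ξ| * h < (Real.pi / h) * h := by
      exact mul_lt_mul_of_pos_right hξ hh
    rw [div_mul_cancel₀ _ (ne_of_gt hh)] at this
    calc |θ| = |ξ| * h := by rw [hθ, abs_mul, abs_of_pos hh]
    _ < Real.pi := this
  have hssin : 0 < s * Real.sin θ := by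
    rcases lt_or_gt_of_ne hω with hωneg | hωpos
    · have hξneg : ξ < 0 := by nlinarith
      have hθneg : θ < 0 := by nlinarith
      have hθlb : -Real.pi < θ := by
        have := abs_lt.mp hθπ; linarith [this.1]
      have hsin : Real.sin θ < 0 := by
        have := Real.sin_pos_of_pos_of_lt_pi (x := -θ) (by linarith) (by linarith)
        rw [Real.sin_neg] at this; linarith
      have hsneg : s < 0 := div_neg_of_pos_of_neg hσ hωneg
      nlinarith
    · have hξpos : 0 < ξ := by nlinarith
      have hθpos : 0 < θ := by positivity
      have hθub : θ < Real.pi := by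
        have := abs_lt.mp hθπ; linarith [this.2]
      have hsin : 0 < Real.sin θ := Real.sin_pos_of_pos_of_lt_pi hθpos hθub
      have hspos : 0 < s := div_pos hσ hωpos
      nlinarith
  -- rewrite exponentials
  have hcast : ((θ : ℝ) : ℂ) = (ξ : ℂ) * (h : ℂ) := by rw [hθ]; push_cast; ring
  have hexp1 : Complex.exp (Complex.I * (ξ : ℂ) * (h : ℂ))
      = (Real.cos θ : ℂ) + (Real.sin θ : ℂ) * Complex.I := by
    rw [show Complex.I * (ξ : ℂ) * (h : ℂ) = ((θ : ℝ) : ℂ) * Complex.I by rw [hcast]; ring,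
      Complex.exp_mul_I, ← Complex.ofReal_cos, ← Complex.ofReal_sin]
  have hexp2 : Complex.exp (-(Complex.I * (ξ : ℂ) * (h : ℂ)))
      = (Real.cos θ : ℂ) - (Real.sin θ : ℂ) * Complex.I := by
    rw [show -(Complex.I * (ξ : ℂ) * (h : ℂ)) = ((-θ : ℝ) : ℂ) * Complex.I by
        rw [Complex.ofReal_neg, hcast]; ring,
      Complex.exp_mul_I, ← Complex.ofReal_cos, ← Complex.ofReal_sin, Real.cos_neg, Real.sin_neg]
    push_cast; ring
  have hsc : ((σ : ℂ) / (ω : ℂ)) = ((s : ℝ) : ℂ) := by push_cast [hs]; ring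
  have hD : 2 + Complex.I * ((σ : ℂ) / (ω : ℂ))
      * (1 - Complex.exp (Complex.I * (ξ : ℂ) * (h : ℂ)))
      = ((2 + s * Real.sin θ : ℝ) : ℂ) + ((s * (1 - Real.cos θ) : ℝ) : ℂ) * Complex.I := by
    rw [hexp1, hsc]
    push_cast
    ring_nf
    rw [Complex.I_sq]
    ring
  have hN : 2 + Complex.I * ((σ : ℂ) / (ω : ℂ))
      * (1 - Complex.exp (-(Complex.I * (ξ : ℂ) * (h : ℂ))))
      = ((2 - s * Real.sin θ : ℝ) : ℂ) + ((s * (1 - Real.cos θ) : ℝ) : ℂ) * Complex.I := by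
    rw [hexp2, hsc]
    push_cast
    ring_nf
    rw [Complex.I_sq]
    ring
  have hDabs : ‖((2 + s * Real.sin θ : ℝ) : ℂ)
      + ((s * (1 - Real.cos θ) : ℝ) : ℂ) * Complex.I‖ ^ 2
      = (2 + s * Real.sin θ) ^ 2 + (s * (1 - Real.cos θ)) ^ 2 := by
    rw [Complex.sq_norm, Complex.normSq_add_mul_I]
  have hNabs : ‖((2 - s * Real.sin θ : ℝ) : ℂ)
      + ((s * (1 - Real.cos θ) : ℝ) : ℂ) * Complex.I‖ ^ 2
      = (2 - s * Real.sin θ) ^ 2 + (s * (1 - Real.cos θ)) ^ 2 := by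
    rw [Complex.sq_norm, Complex.normSq_add_mul_I]
  have hDne : (((2 + s * Real.sin θ : ℝ) : ℂ)
      + ((s * (1 - Real.cos θ) : ℝ) : ℂ) * Complex.I) ≠ 0 := by
    intro hc
    rw [hc, norm_zero] at hDabs
    norm_num at hDabs
    nlinarith [sq_nonneg (s * (1 - Real.cos θ))]
  have hDpos : 0 < ‖((2 + s * Real.sin θ : ℝ) : ℂ)
      + ((s * (1 - Real.cos θ) : ℝ) : ℂ) * Complex.I‖ := norm_pos_iff.mpr hDne
  constructor
  · rw [hD]; exact hDne
  · rw [rho, hD, hN, norm_div, div_lt_one hDpos]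
    apply lt_of_pow_lt_pow_left₀ 2 (norm_nonneg _)
    rw [hDabs, hNabs]
    nlinarith
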